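/- arXiv:0706.3355 — 6 statements merged into one kernel-verified Lean document; each statement's English description precedes it below -/
import Mathlib

section
/- Let K be a field, r, s ∈ K* with r not a root of unity. Define τ = min{ i > 0 : sⁱ = rʲ for some j ∈ ℤ } and ε ∈ ℤ by r^ε = s^τ when this set is nonempty, and τ = ε = 0 otherwise. Then for δ, η ∈ ℤ one has r^δ · s^η = 1 if and only if (δ, η) = λ·(−ε, τ) for some λ ∈ ℤ. -/
theorem stmt3 {K : Type*} [Field K] (r s : Kˣ)
    (hr : ∀ i : ℤ, r ^ i = 1 → i = 0)
    (τ : ℕ) (ε : ℤ)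
    (hcase :
      ((∃ i : ℕ, 0 < i ∧ ∃ j : ℤ, (s : Kˣ) ^ i = r ^ j) ∧
        0 < τ ∧ (∀ i : ℕ, 0 < i → (∃ j : ℤ, s ^ i = r ^ j) → τ ≤ i) ∧
        r ^ ε = s ^ τ) ∨
      ((¬ ∃ i : ℕ, 0 < i ∧ ∃ j : ℤ, s ^ i = r ^ j) ∧ τ = 0 ∧ ε = 0))
    (δ η : ℤ) :
    r ^ δ * s ^ η = 1 ↔ ∃ l : ℤ, δ = l * (-ε) ∧ η = l * τ := by
  constructor
  · intro h
    rcases hcase with ⟨hex, hτ, hmin, hε⟩ | ⟨hnex, hτ0, hε0⟩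
    · -- τ > 0 case
      set q : ℤ := η / (τ : ℤ) with hq
      set ρ : ℤ := η % (τ : ℤ) with hρ
      have hτZ : (0 : ℤ) < (τ : ℤ) := by exact_mod_cast hτ
      have hρ0 : 0 ≤ ρ := Int.emod_nonneg η (ne_of_gt hτZ)
      have hρlt : ρ < (τ : ℤ) := Int.emod_lt_of_pos η hτZ
      have hηeq : η = (τ : ℤ) * q + ρ := (Int.mul_ediv_add_emod η (τ : ℤ)).symm
      have hsη : s ^ η = r ^ (ε * q) * s ^ ρ := by
        rw [hηeq, zpow_add, zpow_mul, zpow_natCast s τ, ← hε, ← zpow_mul]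
      have key : s ^ ρ = r ^ (-(δ + ε * q)) := by
        have := h
        rw [hsη] at this
        have h2 : r ^ (δ + ε * q) * s ^ ρ = 1 := by
          rw [zpow_add, mul_assoc]; exact this
        rw [zpow_neg]
        exact eq_inv_of_mul_eq_one_right h2
      have hρz : ρ = 0 := by
        by_contra hne
        have hρpos : 0 < ρ := lt_of_le_of_ne hρ0 (Ne.symm hne)
        have hρnat : 0 < ρ.toNat := by omega
        have : (τ : ℤ) ≤ ρ := by
          have := hmin ρ.toNat hρnat ⟨-(δ + ε * q), by
            rw [← zpow_natCast s ρ.toNat, Int.toNat_of_nonneg hρ0, key]⟩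
          omega
        omega
      have hη2 : η = q * τ := by rw [hηeq, hρz]; ring
      refine ⟨q, ?_, hη2⟩
      have : r ^ (δ + ε * q) = 1 := by
        have h2 := h
        rw [hsη, hρz, zpow_zero, mul_one, ← zpow_add] at h2
        exact h2
      have h3 := hr _ this
      linear_combination h3
    · -- τ = 0 case
      have hη0 : η = 0 := by
        by_contra hηne
        have hpos : 0 < η.natAbs := by omega
        apply hnex
        refine ⟨η.natAbs, hpos, ?_⟩
        rcases le_or_gt 0 η with hle | hlt
        · refine ⟨-δ, ?_⟩
          have h1 : s ^ η = r ^ (-δ) := by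
            rw [zpow_neg]
            exact eq_inv_of_mul_eq_one_right h
          rw [← zpow_natCast s, Int.natAbs_of_nonneg hle, h1]
        · refine ⟨δ, ?_⟩
          have h2 : s ^ η = (r ^ δ)⁻¹ := eq_inv_of_mul_eq_one_right h
          have h3 : s ^ (-η) = r ^ δ := by rw [zpow_neg, h2, inv_inv]
          rw [← zpow_natCast s, ← Int.natAbs_neg, Int.natAbs_of_nonneg (by omega : (0:ℤ) ≤ -η), h3]
      subst hη0
      rw [zpow_zero, mul_one] at h
      have hδ0 := hr _ h
      exact ⟨0, by omega, by omega⟩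
  · rintro ⟨l, hδ, hη⟩
    subst hδ; subst hη
    rcases hcase with ⟨hex, hτ, hmin, hε⟩ | ⟨hnex, hτ0, hε0⟩
    · rw [mul_comm l (-ε), mul_comm l (τ:ℤ), zpow_mul, zpow_mul, zpow_natCast s τ, ← hε,
        zpow_neg, ← mul_zpow, inv_mul_cancel, one_zpow]
    · subst hτ0; subst hε0; simp
end

section
/- Let K be a field of characteristic 0 and f ∈ K[X] nonzero. Define ρ = gcd{ deg(f) − i : i ∈ supp(f) } if this set is not {0}, and ρ = 0 otherwise. Then for λ ∈ K*, μ ∈ K: f(λX) = μ·f(X) if and only if λ^ρ = 1 and λ^{deg f} = μ. -/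
open Polynomial

lemma coeff_comp_C_mul_X {K : Type*} [Field K] (f : K[X]) (l : K) (i : ℕ) :
    (f.comp (C l * X)).coeff i = l ^ i * f.coeff i := by
  rw [comp_eq_sum_left, coeff_sum, Polynomial.sum]
  simp only [mul_pow, ← C_pow, ← mul_assoc, ← C_mul, coeff_C_mul, coeff_X_pow]
  rw [Finset.sum_eq_single i]
  · by_cases h : i ∈ f.support
    · simp [mul_comm]
    · simp [Polynomial.notMem_support_iff.mp h]
  · intro b _ hb; simp [if_neg (Ne.symm hb)]
  · intro h; simp [Polynomial.notMem_support_iff.mp h]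

theorem stmt4 {K : Type*} [Field K] [CharZero K] (f : K[X]) (hf : f ≠ 0)
    (ρ : ℕ) (hρ : ρ = f.support.gcd (fun i => f.natDegree - i))
    (l μ : K) (hl : l ≠ 0) :
    f.comp (C l * X) = C μ * f ↔ l ^ ρ = 1 ∧ l ^ f.natDegree = μ := by
  set d := f.natDegree with hd
  set u : Kˣ := Units.mk0 l hl with hu
  have hul : (u : K) = l := rfl
  have key : f.comp (C l * X) = C μ * f ↔ ∀ i ∈ f.support, l ^ i = μ := by
    constructor
    · intro h i hi
      have := congrArg (fun p => Polynomial.coeff p i) h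
      simp only [coeff_comp_C_mul_X, coeff_C_mul] at this
      have hci := Polynomial.mem_support_iff.mp hi
      field_simp at this
      exact this
    · intro h
      ext i
      simp only [coeff_comp_C_mul_X, coeff_C_mul]
      by_cases hi : i ∈ f.support
      · rw [h i hi]
      · simp [Polynomial.notMem_support_iff.mp hi]
  rw [key]
  have hdmem : d ∈ f.support := Polynomial.natDegree_mem_support_of_nonzero hf
  constructor
  · intro h
    have hμ : l ^ d = μ := h d hdmem
    refine ⟨?_, hμ⟩
    have hdvd : orderOf u ∣ ρ := by
      rw [hρ]
      apply Finset.dvd_gcd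
      intro i hi
      rw [orderOf_dvd_iff_pow_eq_one]
      have hle : i ≤ d := Polynomial.le_natDegree_of_ne_zero
        (Polynomial.mem_support_iff.mp hi)
      have : l ^ i * l ^ (d - i) = l ^ d := by
        rw [← pow_add, Nat.add_sub_cancel' hle]
      rw [hμ, h i hi] at this
      have hμne : μ ≠ 0 := hμ ▸ pow_ne_zero _ hl
      have hll : l ^ (d - i) = 1 :=
        mul_left_cancel₀ hμne (by rw [this, mul_one])
      ext
      exact hll
    have hpow := orderOf_dvd_iff_pow_eq_one.mp hdvd
    have := congrArg (Units.val) hpow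
    simpa [hul] using this
  · rintro ⟨h1, h2⟩ i hi
    have hle : i ≤ d := Polynomial.le_natDegree_of_ne_zero
      (Polynomial.mem_support_iff.mp hi)
    have hdvd : ρ ∣ d - i := by rw [hρ]; exact Finset.gcd_dvd hi
    obtain ⟨c, hc⟩ := hdvd
    have : l ^ (d - i) = 1 := by rw [hc, pow_mul, h1, one_pow]
    calc l ^ i = l ^ i * l ^ (d - i) := by rw [this, mul_one]
    _ = l ^ d := by rw [← pow_add, Nat.add_sub_cancel' hle]
    _ = μ := h2
end

section
/- Let K be a field, D = K[h,k] the commutative polynomial ring in two variables, and σ the K-algebra automorphism of D with σ(h) = r·h, σ(k) = s·k, where r, s ∈ K*, r not a root of unity. Suppose q ∈ D is nonzero, not divisible by h or by k, and satisfies σ(q) = λ·q for some λ ∈ K*. If moreover the set { i > 0 : sⁱ = rʲ for some j } is empty (i.e. τ = 0 in the paper's notation), then q ∈ K*. -/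
open MvPolynomial

private lemma coeff_bind_scale {K : Type*} [Field K] (r s : K)
    (q : MvPolynomial (Fin 2) K) (d : Fin 2 →₀ ℕ) :
    coeff d (bind₁ ![C r * X 0, C s * X 1] q) = r ^ (d 0) * s ^ (d 1) * coeff d q := by
  induction q using MvPolynomial.induction_on' with
  | monomial e a =>
    rw [bind₁_monomial]
    have : (∏ i ∈ e.support, (![C r * X 0, C s * X 1] i) ^ e i)
        = C (r ^ (e 0) * s ^ (e 1)) * ∏ i ∈ e.support, (X i : MvPolynomial (Fin 2) K) ^ e i := by
      have h2 : ∀ i ∈ e.support, (![C r * X 0, C s * X 1] i) ^ e i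
          = C ((![r, s] i) ^ e i) * (X i : MvPolynomial (Fin 2) K) ^ e i := by
        intro i _
        fin_cases i <;> simp [mul_pow, map_pow]
      rw [Finset.prod_congr rfl h2, Finset.prod_mul_distrib, ← map_prod]
      congr 1
      congr 1
      have : (∏ i ∈ e.support, (![r, s] i) ^ e i) = ∏ i : Fin 2, (![r, s] i) ^ e i := by
        apply Finset.prod_subset (Finset.subset_univ _)
        intro i _ hi
        simp [Finsupp.notMem_support_iff.mp hi]
      rw [this, Fin.prod_univ_two]
      simp
    rw [this,
      show (∏ i ∈ e.support, (X i : MvPolynomial (Fin 2) K) ^ e i)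
        = e.prod fun n k => (X n : MvPolynomial (Fin 2) K) ^ k from rfl,
      ← mul_assoc, mul_comm (C a) (C (r ^ e 0 * s ^ e 1)), mul_assoc, ← monomial_eq,
      coeff_C_mul, coeff_monomial]
    split <;> simp_all
  | add p q hp hq =>
    simp [map_add, coeff_add, hp, hq, mul_add]

private lemma exists_zero_coord {K : Type*} [Field K] (q : MvPolynomial (Fin 2) K)
    (i : Fin 2) (h : ¬ (X i ∣ q)) : ∃ d ∈ q.support, d i = 0 := by
  by_contra hc
  push_neg at hc
  apply h
  rw [q.as_sum]
  apply Finset.dvd_sum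
  intro d hd
  rw [X_dvd_monomial]
  exact Or.inr (hc d hd)

theorem stmt9 {K : Type*} [Field K] (r s : Kˣ)
    (hr : ∀ i : ℤ, r ^ i = 1 → i = 0)
    (hτ : ¬ ∃ i : ℕ, 0 < i ∧ ∃ j : ℤ, (s : Kˣ) ^ i = r ^ j)
    (q : MvPolynomial (Fin 2) K) (hq : q ≠ 0)
    (hh : ¬ (X 0 ∣ q)) (hk : ¬ (X 1 ∣ q))
    (l : K) (hl : l ≠ 0)
    (heig : bind₁ ![C (r : K) * X 0, C (s : K) * X 1] q = C l * q) :
    ∃ c : K, c ≠ 0 ∧ q = C c := by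
  set lu : Kˣ := Units.mk0 l hl with hlu
  -- key: every d in support satisfies r^(d 0) * s^(d 1) = lu
  have key : ∀ d ∈ q.support, r ^ (d 0) * s ^ (d 1) = lu := by
    intro d hd
    have h1 := congrArg (coeff d) heig
    rw [coeff_bind_scale, coeff_C_mul] at h1
    have hdq : coeff d q ≠ 0 := MvPolynomial.mem_support_iff.mp hd
    have h2 : (r : K) ^ (d 0) * (s : K) ^ (d 1) = l :=
      mul_right_cancel₀ hdq h1
    ext
    push_cast
    exact h2
  obtain ⟨dh, hdh, hdh0⟩ := exists_zero_coord q 0 hh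
  obtain ⟨dk, hdk, hdk1⟩ := exists_zero_coord q 1 hk
  -- from dk : r^a = lu with a = dk 0
  have hra : r ^ (dk 0) = lu := by
    have := key dk hdk
    rwa [hdk1, pow_zero, mul_one] at this
  -- every d in support has d 1 = 0
  have hall1 : ∀ d ∈ q.support, d 1 = 0 := by
    intro d hd
    by_contra hne
    apply hτ
    refine ⟨d 1, Nat.pos_of_ne_zero hne, (dk 0 : ℤ) - (d 0 : ℤ), ?_⟩
    have h1 := key d hd
    have : s ^ (d 1) = lu * (r ^ (d 0))⁻¹ := by
      rw [mul_comm] at h1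
      exact eq_mul_inv_of_mul_eq h1
    rw [this, ← hra, zpow_sub, zpow_natCast, zpow_natCast]
  -- lu = 1 from dh
  have hlu1 : lu = 1 := by
    have := key dh hdh
    rw [hdh0, hall1 dh hdh, pow_zero, pow_zero, mul_one] at this
    exact this.symm
  -- every d in support has d 0 = 0
  have hall0 : ∀ d ∈ q.support, d 0 = 0 := by
    intro d hd
    have h1 := key d hd
    rw [hall1 d hd, pow_zero, mul_one, hlu1] at h1
    have : r ^ ((d 0 : ℤ)) = 1 := by rw [zpow_natCast]; exact h1
    exact_mod_cast hr _ this
  -- hence support ⊆ {0}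
  refine ⟨coeff 0 q, ?_, ?_⟩
  · intro h0
    apply hq
    ext d
    by_cases hd : d ∈ q.support
    · have : d = 0 := by
        ext i
        fin_cases i
        · exact hall0 d hd
        · exact hall1 d hd
      rw [this]
      simpa using h0
    · simpa using MvPolynomial.notMem_support_iff.mp hd
  · ext d
    rw [coeff_C]
    by_cases hd : d ∈ q.support
    · have : d = 0 := by
        ext i
        fin_cases i
        · exact hall0 d hd
        · exact hall1 d hd
      simp [this]
    · rw [MvPolynomial.notMem_support_iff.mp hd]
      split <;> simp_all [MvPolynomial.notMem_support_iff.mp hd]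
end

section
/- Let K be a field, r, s ∈ K* with r not a root of unity, and define τ, ε as follows: τ = min{ i>0 : sⁱ = rʲ for some j ∈ ℤ } with r^ε = s^τ if such i exists, else τ = ε = 0. Consider the polynomial ring D = K[h,k] with automorphism σ(h)=rh, σ(k)=sk. The σ-invariant subalgebra { p ∈ D : σ(p) = p } equals K if τ = 0 or ε > 0, and equals the polynomial algebra K[h^{−ε}·k^{τ}] if τ > 0 and ε ≤ 0. -/
open MvPolynomial

namespace Stmt10Aux

variable {K : Type*} [Field K]

lemma monomial_eq_prod (m : Fin 2 →₀ ℕ) (c : K) :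
    (monomial m c : MvPolynomial (Fin 2) K) = C c * X 0 ^ (m 0) * X 1 ^ (m 1) := by
  rw [monomial_eq, Finsupp.prod_fintype _ _ (fun i => pow_zero _), Fin.prod_univ_two, mul_assoc]

lemma sigma_monomial (r s : K) (m : Fin 2 →₀ ℕ) (c : K) :
    bind₁ ![C r * X 0, C s * X 1] (monomial m c) =
      monomial m (r ^ (m 0) * s ^ (m 1) * c) := by
  rw [monomial_eq_prod, monomial_eq_prod]
  simp only [map_mul, map_pow, algHom_C, bind₁_X_right, Matrix.cons_val_zero,
    Matrix.cons_val_one, Matrix.head_cons]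
  rw [algebraMap_eq]
  ring

lemma coeff_sigma (r s : K) (p : MvPolynomial (Fin 2) K) (m : Fin 2 →₀ ℕ) :
    coeff m (bind₁ ![C r * X 0, C s * X 1] p) = r ^ (m 0) * s ^ (m 1) * coeff m p := by
  conv_lhs => rw [p.as_sum]
  rw [map_sum, coeff_sum]
  simp only [sigma_monomial, coeff_monomial]
  rw [Finset.sum_ite_eq' p.support m]
  split_ifs with h
  · rfl
  · rw [notMem_support_iff.mp h, mul_zero]

lemma fixed_iff (r s : K) (p : MvPolynomial (Fin 2) K) :
    bind₁ ![C r * X 0, C s * X 1] p = p ↔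
      ∀ m ∈ p.support, r ^ (m 0) * s ^ (m 1) = 1 := by
  constructor
  · intro h m hm
    have h1 := congrArg (coeff m) h
    rw [coeff_sigma] at h1
    have hc : coeff m p ≠ 0 := mem_support_iff.mp hm
    have h2 : (r ^ (m 0) * s ^ (m 1)) * coeff m p = 1 * coeff m p := by
      rw [one_mul]; exact h1
    exact mul_right_cancel₀ hc h2
  · intro h
    ext m
    rw [coeff_sigma]
    by_cases hm : m ∈ p.support
    · rw [h m hm, one_mul]
    · rw [notMem_support_iff.mp hm, mul_zero]

lemma units_cond (r s : Kˣ) (m0 m1 : ℕ) :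
    (r : K) ^ m0 * (s : K) ^ m1 = 1 ↔ r ^ m0 * s ^ m1 = 1 := by
  rw [Units.ext_iff]
  push_cast
  rfl

lemma num_key (r s : Kˣ) (hr : ∀ i : ℤ, r ^ i = 1 → i = 0)
    (τ : ℕ) (ε : ℤ) (hτ : 0 < τ)
    (hmin : ∀ i : ℕ, 0 < i → (∃ j : ℤ, s ^ i = r ^ j) → τ ≤ i)
    (hre : r ^ ε = s ^ τ)
    (m0 m1 : ℕ) (h : r ^ m0 * s ^ m1 = 1) :
    ∃ q : ℕ, m1 = q * τ ∧ (m0 : ℤ) + q * ε = 0 := by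
  have h1 : s ^ (m1 : ℤ) = r ^ (-(m0 : ℤ)) := by
    rw [zpow_natCast, zpow_neg, zpow_natCast]
    exact eq_inv_of_mul_eq_one_right h
  have hsτ : s ^ (τ : ℤ) = r ^ ε := by rw [zpow_natCast, hre]
  set q := m1 / τ with hqdef
  set ρ := m1 % τ with hρdef
  have hm1 : m1 = τ * q + ρ := (Nat.div_add_mod m1 τ).symm
  have h2 : s ^ (ρ : ℤ) = r ^ (-(m0 : ℤ) - q * ε) := by
    have hρz : (ρ : ℤ) = (m1 : ℤ) - τ * q := by omega
    rw [hρz, zpow_sub, h1, zpow_mul, hsτ, ← zpow_mul, ← zpow_neg, ← zpow_add]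
    ring_nf
  have hρ0 : ρ = 0 := by
    by_contra hne
    have hle := hmin ρ (Nat.pos_of_ne_zero hne)
      ⟨-(m0 : ℤ) - q * ε, by rw [← zpow_natCast s ρ]; exact h2⟩
    have hlt : ρ < τ := Nat.mod_lt m1 hτ
    omega
  have hm1' : m1 = q * τ := by rw [mul_comm]; omega
  refine ⟨q, hm1', ?_⟩
  apply hr
  have h3 : s ^ (m1 : ℤ) = r ^ ((q : ℤ) * ε) := by
    rw [show (m1 : ℤ) = (τ : ℤ) * q by exact_mod_cast hm1'.trans (Nat.mul_comm q τ), zpow_mul, hsτ, ← zpow_mul]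
    ring_nf
  rw [h1] at h3
  have h4 : r ^ ((q : ℤ) * ε + (m0 : ℤ)) = 1 := by
    rw [zpow_add, ← h3, zpow_neg, zpow_natCast, inv_mul_cancel]
  rw [show (m0 : ℤ) + (q : ℤ) * ε = (q : ℤ) * ε + (m0 : ℤ) by ring]
  exact h4

end Stmt10Aux

open Stmt10Aux in
theorem stmt10 {K : Type*} [Field K] (r s : Kˣ)
    (hr : ∀ i : ℤ, r ^ i = 1 → i = 0)
    (τ : ℕ) (ε : ℤ)
    (hcase :
      ((∃ i : ℕ, 0 < i ∧ ∃ j : ℤ, (s : Kˣ) ^ i = r ^ j) ∧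
        0 < τ ∧ (∀ i : ℕ, 0 < i → (∃ j : ℤ, s ^ i = r ^ j) → τ ≤ i) ∧
        r ^ ε = s ^ τ) ∨
      ((¬ ∃ i : ℕ, 0 < i ∧ ∃ j : ℤ, s ^ i = r ^ j) ∧ τ = 0 ∧ ε = 0)) :
    (τ = 0 ∨ 0 < ε →
      {p : MvPolynomial (Fin 2) K | bind₁ ![C (r : K) * X 0, C (s : K) * X 1] p = p} =
        ((⊥ : Subalgebra K (MvPolynomial (Fin 2) K)) : Set (MvPolynomial (Fin 2) K))) ∧
    (0 < τ → ε ≤ 0 →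
      {p : MvPolynomial (Fin 2) K | bind₁ ![C (r : K) * X 0, C (s : K) * X 1] p = p} =
        ((Algebra.adjoin K {X 0 ^ (-ε).toNat * X 1 ^ τ} :
          Subalgebra K (MvPolynomial (Fin 2) K)) : Set (MvPolynomial (Fin 2) K))) := by
  constructor
  · -- Case τ = 0 or 0 < ε : invariants are the constants
    intro hcond
    ext p
    simp only [Set.mem_setOf_eq, SetLike.mem_coe, Algebra.mem_bot, Set.mem_range]
    constructor
    · intro h
      rw [fixed_iff] at h
      have hsupp : ∀ m ∈ p.support, m = 0 := by
        intro m hm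
        have hu : r ^ (m 0) * s ^ (m 1) = 1 := (units_cond r s _ _).mp (h m hm)
        have hm0 : m 0 = 0 ∧ m 1 = 0 := by
          rcases hcase with ⟨hex, hτpos, hmin, hre⟩ | ⟨hnex, hτ0, hε0⟩
          · -- left case; here necessarily 0 < ε
            have hε : 0 < ε := by
              rcases hcond with h0 | h0
              · omega
              · exact h0
            obtain ⟨q, hq1, hq2⟩ := num_key r s hr τ ε hτpos hmin hre (m 0) (m 1) hu
            have hqε : 0 ≤ (q : ℤ) * ε := mul_nonneg (Int.natCast_nonneg q) hε.le
            have hq0 : (q : ℤ) * ε = 0 := by omega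
            have hqz : q = 0 := by
              rcases mul_eq_zero.mp hq0 with h' | h'
              · exact_mod_cast h'
              · omega
            constructor
            · omega
            · rw [hq1, hqz, zero_mul]
          · -- right case
            have hm1 : m 1 = 0 := by
              by_contra hne
              exact hnex ⟨m 1, Nat.pos_of_ne_zero hne,
                ⟨-(m 0 : ℤ), by
                  rw [← zpow_natCast s (m 1), zpow_natCast, zpow_neg, zpow_natCast]
                  exact eq_inv_of_mul_eq_one_right hu⟩⟩
            have hm0 : m 0 = 0 := by
              rw [hm1, pow_zero, mul_one] at hu
              have := hr (m 0) (by rw [zpow_natCast]; exact hu)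
              exact_mod_cast this
            exact ⟨hm0, hm1⟩
        apply Finsupp.ext
        intro i
        fin_cases i
        · simpa using hm0.1
        · simpa using hm0.2
      refine ⟨coeff 0 p, ?_⟩
      rw [algebraMap_eq]
      ext m
      rw [coeff_C]
      split_ifs with hm
      · rw [← hm]
      · rw [notMem_support_iff.mp]
        intro hmem
        exact hm ((hsupp m hmem).symm)
    · rintro ⟨c, rfl⟩
      exact (bind₁ ![C (r : K) * X 0, C (s : K) * X 1]).commutes c
  · -- Case 0 < τ and ε ≤ 0 : invariants are K[h^{-ε} k^τ]
    intro hτ hε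
    rcases hcase with ⟨hex, hτpos, hmin, hre⟩ | ⟨_, hτ0, _⟩
    swap
    · omega
    have haε : (((-ε).toNat : ℤ)) = -ε := Int.toNat_of_nonneg (by omega)
    set a := (-ε).toNat with hadef
    ext p
    simp only [Set.mem_setOf_eq, SetLike.mem_coe]
    constructor
    · intro h
      rw [fixed_iff] at h
      have hsum : p = ∑ m ∈ p.support, monomial m (coeff m p) := p.as_sum
      rw [hsum]
      apply Subalgebra.sum_mem
      intro m hm
      have hu : r ^ (m 0) * s ^ (m 1) = 1 := (units_cond r s _ _).mp (h m hm)
      obtain ⟨q, hq1, hq2⟩ := num_key r s hr τ ε hτpos hmin hre (m 0) (m 1) hu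
      have hm0 : m 0 = q * a := by
        have h' : ((m 0 : ℕ) : ℤ) = (q : ℤ) * (a : ℤ) := by
          rw [haε]; linear_combination hq2
        exact_mod_cast h'
      rw [monomial_eq_prod, hm0, hq1]
      have heq : (C (coeff m p) : MvPolynomial (Fin 2) K) * X 0 ^ (q * a) * X 1 ^ (q * τ) =
          C (coeff m p) * (X 0 ^ a * X 1 ^ τ) ^ q := by
        rw [mul_pow, ← pow_mul, ← pow_mul]
        ring
      rw [heq]
      have h1 : (C (coeff m p) : MvPolynomial (Fin 2) K) ∈
          Algebra.adjoin K {X 0 ^ a * X 1 ^ τ} := by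
        rw [← algebraMap_eq]
        exact Subalgebra.algebraMap_mem _ _
      exact mul_mem h1 (pow_mem (Algebra.subset_adjoin (Set.mem_singleton _)) q)
    · intro hp
      have hone' : r ^ a * s ^ τ = 1 := by
        have hz : r ^ (a : ℤ) * s ^ (τ : ℤ) = 1 := by
          rw [zpow_natCast s τ, ← hre, ← zpow_add, haε, neg_add_cancel, zpow_zero]
        rw [← zpow_natCast r a, ← zpow_natCast s τ]
        exact hz
      have hone : (r : K) ^ a * (s : K) ^ τ = 1 := (units_cond r s a τ).mpr hone'
      have hg : bind₁ ![C (r : K) * X 0, C (s : K) * X 1]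
          ((X 0 : MvPolynomial (Fin 2) K) ^ a * X 1 ^ τ) =
          (X 0 : MvPolynomial (Fin 2) K) ^ a * X 1 ^ τ := by
        simp only [map_mul, map_pow, bind₁_X_right, Matrix.cons_val_zero,
          Matrix.cons_val_one, Matrix.head_cons]
        rw [mul_pow, mul_pow,
          show (C (r : K)) ^ a * (X 0 : MvPolynomial (Fin 2) K) ^ a *
              ((C (s : K)) ^ τ * (X 1 : MvPolynomial (Fin 2) K) ^ τ) =
            C ((r : K) ^ a * (s : K) ^ τ) *
              ((X 0 : MvPolynomial (Fin 2) K) ^ a * X 1 ^ τ) by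
              rw [C_mul, C_pow, C_pow]; ring,
          hone, C_1, one_mul]
      have hle : Algebra.adjoin K {X 0 ^ a * X 1 ^ τ} ≤
          AlgHom.equalizer (bind₁ ![C (r : K) * X 0, C (s : K) * X 1])
            (AlgHom.id K (MvPolynomial (Fin 2) K)) := by
        rw [Algebra.adjoin_le_iff]
        intro x hx
        rw [Set.mem_singleton_iff] at hx
        subst hx
        exact (AlgHom.mem_equalizer _ _ _).mpr hg
      exact (AlgHom.mem_equalizer _ _ _).mp (hle hp)
end

section
/- Let K be a field of characteristic 0, s ∈ K*, γ ∈ K, and f ∈ K[X]. The generalized down-up algebra L(f, 1, s, γ) is conformal (i.e. there exists g ∈ K[X] with f(X) = s·g(X) − g(X − γ)) except exactly in the case s = 1, γ = 0 and f ≠ 0. -/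
open Polynomial

private lemma coeff_X_sub_C_pow' {K : Type*} [Field K] (γ : K) (m k : ℕ) :
    (((X : K[X]) - C γ) ^ m).coeff k = (-γ) ^ (m - k) * (m.choose k : K) := by
  rw [sub_eq_add_neg, ← C_neg, coeff_X_add_C_pow]

private lemma aux15 {K : Type*} [Field K] [CharZero K] (s γ : K) (h : s ≠ 1 ∨ γ ≠ 0) :
    ∀ n (f : K[X]), f.natDegree < n → ∃ g : K[X], f = C s * g - g.comp (X - C γ) := by
  intro n
  induction n with
  | zero => exact fun f hf => absurd hf (Nat.not_lt_zero _)
  | succ n ih =>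
    intro f hf
    have hfn : f.natDegree ≤ n := Nat.lt_succ_iff.mp hf
    rcases eq_or_ne s 1 with rfl | hs1
    · -- s = 1, so γ ≠ 0
      have hγ : γ ≠ 0 := h.resolve_left (by simp)
      have hn1 : ((n : K) + 1) ≠ 0 := by
        exact_mod_cast (Nat.cast_ne_zero (R := K)).mpr (Nat.succ_ne_zero n)
      set a : K := f.coeff n / (((n : K) + 1) * γ) with ha
      set g₀ : K[X] := C a * X ^ (n + 1) with hg₀
      have hcomp : g₀.comp (X - C γ) = C a * (X - C γ) ^ (n + 1) := by
        simp [hg₀, mul_comp, X_pow_comp]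
      set f' : K[X] := f - (C 1 * g₀ - g₀.comp (X - C γ)) with hf'
      have hk : ∀ k, n ≤ k → f'.coeff k = 0 := by
        intro k hkn
        rw [hf', hcomp, hg₀]
        rcases eq_or_lt_of_le hkn with rfl | hkn'
        · simp only [coeff_sub, coeff_C_mul, coeff_X_pow, coeff_X_sub_C_pow', one_mul,
            Nat.add_sub_cancel_left, Nat.choose_succ_self_right, (Nat.lt_succ_self _).ne, if_false]
          rw [ha]
          push_cast
          field_simp
          ring
        · have hfk : f.coeff k = 0 := coeff_eq_zero_of_natDegree_lt (lt_of_le_of_lt hfn hkn')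
          rcases eq_or_lt_of_le (Nat.succ_le_of_lt hkn') with hkeq | hkn''
          · subst hkeq
            simp [coeff_sub, coeff_C_mul, coeff_X_pow, coeff_X_sub_C_pow', hfk]
          · simp [coeff_sub, coeff_C_mul, coeff_X_pow, coeff_X_sub_C_pow', hfk,
              hkn''.ne, hkn''.ne', Nat.choose_eq_zero_of_lt hkn'']
      by_cases hf0 : f' = 0
      · exact ⟨g₀, by rw [← sub_eq_zero]; exact hf0⟩
      · have hdeg : f'.natDegree < n := by
          by_contra hle
          push_neg at hle
          exact hf0 (leadingCoeff_eq_zero.mp (hk _ hle))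
        obtain ⟨g₁, hg₁⟩ := ih f' hdeg
        refine ⟨g₀ + g₁, ?_⟩
        have hsplit : f = (C 1 * g₀ - g₀.comp (X - C γ)) + f' := by rw [hf']; ring
        rw [hsplit, hg₁, add_comp]
        ring
    · -- s ≠ 1
      set a : K := f.coeff n / (s - 1) with ha
      set g₀ : K[X] := C a * X ^ n with hg₀
      have hcomp : g₀.comp (X - C γ) = C a * (X - C γ) ^ n := by
        simp [hg₀, mul_comp, X_pow_comp]
      set f' : K[X] := f - (C s * g₀ - g₀.comp (X - C γ)) with hf'
      have hs1' : s - 1 ≠ 0 := sub_ne_zero.mpr hs1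
      have hk : ∀ k, n ≤ k → f'.coeff k = 0 := by
        intro k hkn
        rw [hf', hcomp, hg₀]
        rcases eq_or_lt_of_le hkn with rfl | hkn'
        · simp only [coeff_sub, coeff_C_mul, coeff_X_pow, coeff_X_sub_C_pow', Nat.sub_self,
            pow_zero, Nat.choose_self, Nat.cast_one, one_mul, mul_one, if_pos rfl, ↓reduceIte]
          rw [ha]
          field_simp
          ring
        · have hfk : f.coeff k = 0 := coeff_eq_zero_of_natDegree_lt (lt_of_le_of_lt hfn hkn')
          simp [coeff_sub, coeff_C_mul, coeff_X_pow, coeff_X_sub_C_pow', hfk,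
            hkn'.ne, hkn'.ne', Nat.choose_eq_zero_of_lt hkn']
      by_cases hf0 : f' = 0
      · exact ⟨g₀, by rw [← sub_eq_zero]; exact hf0⟩
      · have hdeg : f'.natDegree < n := by
          by_contra hle
          push_neg at hle
          exact hf0 (leadingCoeff_eq_zero.mp (hk _ hle))
        obtain ⟨g₁, hg₁⟩ := ih f' hdeg
        refine ⟨g₀ + g₁, ?_⟩
        have hsplit : f = (C s * g₀ - g₀.comp (X - C γ)) + f' := by rw [hf']; ring
        rw [hsplit, hg₁, add_comp]
        ring

theorem stmt15 {K : Type*} [Field K] [CharZero K] (s γ : K) (hs : s ≠ 0) (f : K[X]) :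
    (∃ g : K[X], f = C s * g - g.comp (X - C γ)) ↔ ¬(s = 1 ∧ γ = 0 ∧ f ≠ 0) := by
  constructor
  · rintro ⟨g, rfl⟩ ⟨rfl, rfl, hf⟩
    apply hf
    simp
  · intro h
    push_neg at h
    rcases eq_or_ne s 1 with rfl | hs1
    · rcases eq_or_ne γ 0 with rfl | hγ
      · have hf0 : f = 0 := h rfl rfl
        exact ⟨0, by simp [hf0]⟩
      · exact aux15 1 γ (Or.inr hγ) (f.natDegree + 1) f (Nat.lt_succ_self _)
    · exact aux15 s γ (Or.inl hs1) (f.natDegree + 1) f (Nat.lt_succ_self _)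
end

section
/- Let K be a field of characteristic 0, r, s, μ, μ', ν ∈ K*, η, β ∈ K, with s^τ = r for a fixed τ ≥ 1 and β(μμ' − 1) = 0. In the K-algebra L generated by x, y, h, k with relations x·h = r·h·x, h·y = r·y·h, x·k = s·k·x, k·y = s·y·k, y·x = k + β/(s−1), x·y = s·k + β/(s−1) (assuming s ≠ 1), hk = kh, the assignment x ↦ μx, y ↦ μ'y, h ↦ νh + ηk^τ, k ↦ μμ'k extends to a K-algebra automorphism. -/
noncomputable section

open FreeAlgebra

/-- Defining relations of the algebra `L` with generators `x = ι 0`, `y = ι 1`, `h = ι 2`,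
`k = ι 3`: `x h = r·h x`, `h y = r·y h`, `x k = s·k x`, `k y = s·y k`,
`y x = k + β/(s−1)`, `x y = s·k + β/(s−1)`, `h k = k h`. -/
def L18Rel (K : Type*) [Field K] (r s β : K) :
    FreeAlgebra K (Fin 4) → FreeAlgebra K (Fin 4) → Prop :=
  fun a b =>
    (a = ι K 0 * ι K 2 ∧ b = r • (ι K 2 * ι K 0)) ∨
    (a = ι K 2 * ι K 1 ∧ b = r • (ι K 1 * ι K 2)) ∨
    (a = ι K 0 * ι K 3 ∧ b = s • (ι K 3 * ι K 0)) ∨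
    (a = ι K 3 * ι K 1 ∧ b = s • (ι K 1 * ι K 3)) ∨
    (a = ι K 1 * ι K 0 ∧ b = ι K 3 + (β / (s - 1)) • 1) ∨
    (a = ι K 0 * ι K 1 ∧ b = s • ι K 3 + (β / (s - 1)) • 1) ∨
    (a = ι K 2 * ι K 3 ∧ b = ι K 3 * ι K 2)

/-- The algebra `L` of Statement 18. -/
abbrev L18 (K : Type*) [Field K] (r s β : K) := RingQuot (L18Rel K r s β)

/-- The generator `x`. -/
def L18x (K : Type*) [Field K] (r s β : K) : L18 K r s β :=
  RingQuot.mkAlgHom K (L18Rel K r s β) (ι K 0)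

/-- The generator `y`. -/
def L18y (K : Type*) [Field K] (r s β : K) : L18 K r s β :=
  RingQuot.mkAlgHom K (L18Rel K r s β) (ι K 1)

/-- The generator `h`. -/
def L18h (K : Type*) [Field K] (r s β : K) : L18 K r s β :=
  RingQuot.mkAlgHom K (L18Rel K r s β) (ι K 2)

/-- The generator `k`. -/
def L18k (K : Type*) [Field K] (r s β : K) : L18 K r s β :=
  RingQuot.mkAlgHom K (L18Rel K r s β) (ι K 3)

section Aux

variable {K : Type*} [Field K] (r s β : K)

local notation "X" => L18x K r s β
local notation "Y" => L18y K r s β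
local notation "H" => L18h K r s β
local notation "Km" => L18k K r s β

lemma L18rel_xh : X * H = r • (H * X) := by
  have h0 : (RingQuot.mkAlgHom K (L18Rel K r s β)) (ι K 0 * ι K 2) =
      (RingQuot.mkAlgHom K (L18Rel K r s β)) (r • (ι K 2 * ι K 0)) :=
    RingQuot.mkAlgHom_rel K (Or.inl ⟨rfl, rfl⟩)
  simpa [L18x, L18h, map_mul] using h0

lemma L18rel_hy : H * Y = r • (Y * H) := by
  have h0 : (RingQuot.mkAlgHom K (L18Rel K r s β)) (ι K 2 * ι K 1) =
      (RingQuot.mkAlgHom K (L18Rel K r s β)) (r • (ι K 1 * ι K 2)) :=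
    RingQuot.mkAlgHom_rel K (Or.inr (Or.inl ⟨rfl, rfl⟩))
  simpa [L18y, L18h, map_mul] using h0

lemma L18rel_xk : X * Km = s • (Km * X) := by
  have h0 : (RingQuot.mkAlgHom K (L18Rel K r s β)) (ι K 0 * ι K 3) =
      (RingQuot.mkAlgHom K (L18Rel K r s β)) (s • (ι K 3 * ι K 0)) :=
    RingQuot.mkAlgHom_rel K (Or.inr (Or.inr (Or.inl ⟨rfl, rfl⟩)))
  simpa [L18x, L18k, map_mul] using h0

lemma L18rel_ky : Km * Y = s • (Y * Km) := by
  have h0 : (RingQuot.mkAlgHom K (L18Rel K r s β)) (ι K 3 * ι K 1) =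
      (RingQuot.mkAlgHom K (L18Rel K r s β)) (s • (ι K 1 * ι K 3)) :=
    RingQuot.mkAlgHom_rel K (Or.inr (Or.inr (Or.inr (Or.inl ⟨rfl, rfl⟩))))
  simpa [L18y, L18k, map_mul] using h0

lemma L18rel_yx : Y * X = Km + (β / (s - 1)) • 1 := by
  have h0 : (RingQuot.mkAlgHom K (L18Rel K r s β)) (ι K 1 * ι K 0) =
      (RingQuot.mkAlgHom K (L18Rel K r s β)) (ι K 3 + (β / (s - 1)) • 1) :=
    RingQuot.mkAlgHom_rel K (Or.inr (Or.inr (Or.inr (Or.inr (Or.inl ⟨rfl, rfl⟩)))))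
  simpa [L18x, L18y, L18k, map_mul] using h0

lemma L18rel_xy : X * Y = s • Km + (β / (s - 1)) • 1 := by
  have h0 : (RingQuot.mkAlgHom K (L18Rel K r s β)) (ι K 0 * ι K 1) =
      (RingQuot.mkAlgHom K (L18Rel K r s β)) (s • ι K 3 + (β / (s - 1)) • 1) :=
    RingQuot.mkAlgHom_rel K (Or.inr (Or.inr (Or.inr (Or.inr (Or.inr (Or.inl ⟨rfl, rfl⟩))))))
  simpa [L18x, L18y, L18k, map_mul] using h0

lemma L18rel_hk : H * Km = Km * H := by
  have h0 : (RingQuot.mkAlgHom K (L18Rel K r s β)) (ι K 2 * ι K 3) =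
      (RingQuot.mkAlgHom K (L18Rel K r s β)) (ι K 3 * ι K 2) :=
    RingQuot.mkAlgHom_rel K (Or.inr (Or.inr (Or.inr (Or.inr (Or.inr (Or.inr ⟨rfl, rfl⟩))))))
  simpa [L18h, L18k, map_mul] using h0

lemma L18rel_xkpow (n : ℕ) : X * Km ^ n = s ^ n • (Km ^ n * X) := by
  induction n with
  | zero => simp
  | succ n ih =>
    rw [pow_succ, ← mul_assoc, ih, smul_mul_assoc, mul_assoc, L18rel_xk,
      mul_smul_comm, smul_smul]
    conv_rhs => rw [pow_succ, mul_assoc]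

lemma L18rel_kpowy (n : ℕ) : Km ^ n * Y = s ^ n • (Y * Km ^ n) := by
  induction n with
  | zero => simp
  | succ n ih =>
    rw [pow_succ, mul_assoc, L18rel_ky, mul_smul_comm, ← mul_assoc, ih, smul_mul_assoc,
      smul_smul, ← pow_succ', mul_assoc]

lemma L18rel_hkpow (n : ℕ) : H * Km ^ n = Km ^ n * H :=
  ((show Commute H Km from L18rel_hk r s β).pow_right n).eq

lemma L18hom_exists (τ : ℕ) (μ μ' ν η : K)
    (hsr : s ^ τ = r) (hc : β / (s - 1) * (μ * μ' - 1) = 0) :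
    ∃ F : L18 K r s β →ₐ[K] L18 K r s β,
      F X = μ • X ∧ F Y = μ' • Y ∧ F H = ν • H + η • Km ^ τ ∧
      F Km = (μ * μ') • Km := by
  set g : Fin 4 → L18 K r s β :=
    ![μ • X, μ' • Y, ν • H + η • Km ^ τ, (μ * μ') • Km] with hg
  have hrel : ∀ ⦃a b⦄, L18Rel K r s β a b →
      (FreeAlgebra.lift K g) a = (FreeAlgebra.lift K g) b := by
    rintro a b (⟨rfl, rfl⟩ | ⟨rfl, rfl⟩ | ⟨rfl, rfl⟩ | ⟨rfl, rfl⟩ | ⟨rfl, rfl⟩ |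
      ⟨rfl, rfl⟩ | ⟨rfl, rfl⟩) <;>
      simp only [map_mul, map_smul, map_add, map_one, FreeAlgebra.lift_ι_apply, hg,
        Matrix.cons_val_zero, Matrix.cons_val_one, Matrix.head_cons,
        Matrix.cons_val_two, Matrix.tail_cons, Matrix.cons_val_three]
    · simp only [mul_add, add_mul, smul_mul_assoc, mul_smul_comm, smul_add, smul_smul]
      rw [L18rel_xh, L18rel_xkpow, hsr]
      module
    · simp only [mul_add, add_mul, smul_mul_assoc, mul_smul_comm, smul_add, smul_smul]
      rw [L18rel_hy, L18rel_kpowy, hsr]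
      module
    · simp only [smul_mul_assoc, mul_smul_comm, smul_smul]
      rw [L18rel_xk]
      module
    · simp only [smul_mul_assoc, mul_smul_comm, smul_smul]
      rw [L18rel_ky]
      module
    · simp only [smul_mul_assoc, mul_smul_comm, smul_smul]
      rw [L18rel_yx]
      match_scalars
      · ring
      · linear_combination hc
    · simp only [smul_mul_assoc, mul_smul_comm, smul_smul]
      rw [L18rel_xy]
      match_scalars
      · ring
      · linear_combination hc
    · simp only [mul_add, add_mul, smul_mul_assoc, mul_smul_comm, smul_add, smul_smul]
      rw [L18rel_hk, ← pow_succ, ← pow_succ']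
      module
  refine ⟨RingQuot.liftAlgHom K ⟨FreeAlgebra.lift K g, hrel⟩, ?_, ?_, ?_, ?_⟩ <;>
    simp [L18x, L18y, L18h, L18k, RingQuot.liftAlgHom_mkAlgHom_apply, hg]

end Aux

theorem stmt18 {K : Type*} [Field K] [CharZero K]
    (r s μ μ' ν η β : K) (τ : ℕ) (hτ : 1 ≤ τ)
    (hr : r ≠ 0) (hs : s ≠ 0) (hs1 : s ≠ 1)
    (hμ : μ ≠ 0) (hμ' : μ' ≠ 0) (hν : ν ≠ 0)
    (hsr : s ^ τ = r) (hβ : β * (μ * μ' - 1) = 0) :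
    ∃ φ : L18 K r s β ≃ₐ[K] L18 K r s β,
      φ (L18x K r s β) = μ • L18x K r s β ∧
      φ (L18y K r s β) = μ' • L18y K r s β ∧
      φ (L18h K r s β) = ν • L18h K r s β + η • (L18k K r s β) ^ τ ∧
      φ (L18k K r s β) = (μ * μ') • L18k K r s β := by
  have hmm' : μ * μ' ≠ 0 := mul_ne_zero hμ hμ'
  have hc : β / (s - 1) * (μ * μ' - 1) = 0 := by
    rw [div_mul_eq_mul_div, hβ, zero_div]
  have hc' : β / (s - 1) * (μ⁻¹ * μ'⁻¹ - 1) = 0 := by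
    rcases mul_eq_zero.mp hβ with h | h
    · simp [h]
    · have h1 : μ * μ' = 1 := by linear_combination h
      have : μ⁻¹ * μ'⁻¹ = 1 := by rw [← mul_inv, h1, inv_one]
      simp [this]
  obtain ⟨F, hFx, hFy, hFh, hFk⟩ := L18hom_exists r s β τ μ μ' ν η hsr hc
  obtain ⟨G, hGx, hGy, hGh, hGk⟩ :=
    L18hom_exists r s β τ μ⁻¹ μ'⁻¹ ν⁻¹ (-(ν⁻¹ * η * ((μ * μ')^τ)⁻¹)) hsr hc'
  have hFG : F.comp G = AlgHom.id K (L18 K r s β) := by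
    apply RingQuot.ringQuot_ext'
    apply FreeAlgebra.hom_ext
    funext i
    fin_cases i <;>
      simp only [Function.comp_apply, AlgHom.coe_comp, AlgHom.coe_id, id_eq]
    · show F (G (L18x K r s β)) = L18x K r s β
      rw [hGx, map_smul, hFx, smul_smul, inv_mul_cancel₀ hμ, one_smul]
    · show F (G (L18y K r s β)) = L18y K r s β
      rw [hGy, map_smul, hFy, smul_smul, inv_mul_cancel₀ hμ', one_smul]
    · show F (G (L18h K r s β)) = L18h K r s β
      rw [hGh, map_add, map_smul, map_smul, map_pow, hFh, hFk, smul_pow, smul_add,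
        smul_smul, smul_smul, smul_smul, inv_mul_cancel₀ hν]
      have : -(ν⁻¹ * η * ((μ * μ') ^ τ)⁻¹) * (μ * μ') ^ τ = -(ν⁻¹ * η) := by
        field_simp
      rw [this]
      module
    · show F (G (L18k K r s β)) = L18k K r s β
      rw [hGk, map_smul, hFk, smul_smul]
      have : μ⁻¹ * μ'⁻¹ * (μ * μ') = 1 := by field_simp
      rw [this, one_smul]
  have hGF : G.comp F = AlgHom.id K (L18 K r s β) := by
    apply RingQuot.ringQuot_ext'
    apply FreeAlgebra.hom_ext
    funext i
    fin_cases i <;>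
      simp only [Function.comp_apply, AlgHom.coe_comp, AlgHom.coe_id, id_eq]
    · show G (F (L18x K r s β)) = L18x K r s β
      rw [hFx, map_smul, hGx, smul_smul, mul_inv_cancel₀ hμ, one_smul]
    · show G (F (L18y K r s β)) = L18y K r s β
      rw [hFy, map_smul, hGy, smul_smul, mul_inv_cancel₀ hμ', one_smul]
    · show G (F (L18h K r s β)) = L18h K r s β
      rw [hFh, map_add, map_smul, map_smul, map_pow, hGh, hGk, smul_pow, smul_add,
        smul_smul, smul_smul, smul_smul, mul_inv_cancel₀ hν]
      have h2 : (μ⁻¹ * μ'⁻¹) ^ τ = ((μ * μ') ^ τ)⁻¹ := by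
        rw [← mul_inv, inv_pow]
      rw [h2]
      have : η * ((μ * μ') ^ τ)⁻¹ = -(ν * -(ν⁻¹ * η * ((μ * μ') ^ τ)⁻¹)) := by
        field_simp
      rw [this]
      module
    · show G (F (L18k K r s β)) = L18k K r s β
      rw [hFk, map_smul, hGk, smul_smul]
      have : μ * μ' * (μ⁻¹ * μ'⁻¹) = 1 := by field_simp
      rw [this, one_smul]
  exact ⟨AlgEquiv.ofAlgHom F G hFG hGF, hFx, hFy, hFh, hFk⟩
end
end
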